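/- There exists a group homomorphism φ from the mixed braid group B_{m,n} (given by its presentation) to the Artin braid group B_{m+n} on m+n strands such that φ(a_i) = σ_m σ_{m−1} ⋯ σ_{i+1} σ_i^2 σ_{i+1}^{−1} ⋯ σ_m^{−1} for 1 ≤ i ≤ m, and φ(σ_j) = σ_{m+j} for 1 ≤ j ≤ n−1; that is, the images of the generators satisfy all the defining relations of B_{m,n} inside B_{m+n}. -/
import Mathlib


/-- Defining relations of the Artin braid group on `N` strands, with generators
indexed by `Fin (N-1)` (index `s : Fin (N-1)` corresponds to the 1-based generator
`σ_{s+1}`): the far commutation relations and the braid relations. -/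
def braidRels (N : ℕ) : Set (FreeGroup (Fin (N - 1))) :=
  {x | ∃ s t : Fin (N - 1), (s : ℕ) + 2 ≤ (t : ℕ) ∧
      x = FreeGroup.of s * FreeGroup.of t * (FreeGroup.of s)⁻¹ * (FreeGroup.of t)⁻¹} ∪
  {x | ∃ s t : Fin (N - 1), (s : ℕ) + 1 = (t : ℕ) ∧
      x = FreeGroup.of s * FreeGroup.of t * FreeGroup.of s *
          (FreeGroup.of t)⁻¹ * (FreeGroup.of s)⁻¹ * (FreeGroup.of t)⁻¹}

/-- The Artin braid group on `N` strands. -/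
abbrev BraidGroup (N : ℕ) := PresentedGroup (braidRels N)

/-- The generator `σ_s` (1-based, `1 ≤ s ≤ N-1`); junk value `1` out of range. -/
def sig (N s : ℕ) : BraidGroup N :=
  if h : 1 ≤ s ∧ s ≤ N - 1 then PresentedGroup.of ⟨s - 1, by omega⟩ else 1

/-- The loop element `a_i = σ_m σ_{m-1} ⋯ σ_{i+1} · σ_i² · σ_{i+1}⁻¹ ⋯ σ_m⁻¹`
(so `a_m = σ_m²`) in the braid group on `N` strands, `m` of which are fixed. -/
def loop (N m i : ℕ) : BraidGroup N :=
  (((List.range (m - i)).map (fun l => sig N (m - l))).prod) * (sig N i) ^ 2 *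
    (((List.range (m - i)).map (fun l => sig N (m - l))).prod)⁻¹

/-- `λ_l := σ_{m+l} σ_{m+l-1} ⋯ σ_{m+1}`, with `λ_0 := 1`. -/
def lam (N m l : ℕ) : BraidGroup N :=
  ((List.range l).map (fun t => sig N (m + l - t))).prod

/-- The positive looping `∏_{l=0}^{q-1} λ_l a_j λ_l⁻¹` of a `q`-strand cable of
moving strands around the `j`-th fixed strand. -/
def cable (N m j q : ℕ) : BraidGroup N :=
  ((List.range q).map (fun l => lam N m l * loop N m j * (lam N m l)⁻¹)).prod

/-- The free-group generator corresponding to the loop generator `a_{i+1}`. -/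
def genA (m n : ℕ) (i : Fin m) : FreeGroup (Fin m ⊕ Fin (n - 1)) :=
  FreeGroup.of (Sum.inl i)

/-- The free-group generator corresponding to the braiding generator `σ_{k+1}`. -/
def genS (m n : ℕ) (k : Fin (n - 1)) : FreeGroup (Fin m ⊕ Fin (n - 1)) :=
  FreeGroup.of (Sum.inr k)

/-- The defining relations of the mixed braid group `B_{m,n}`:
`σ_k σ_j = σ_j σ_k` for `|k-j| > 1`; `σ_k σ_{k+1} σ_k = σ_{k+1} σ_k σ_{k+1}`;
`a_i σ_k = σ_k a_i` for `k ≥ 2`; `a_i σ_1 a_i σ_1 = σ_1 a_i σ_1 a_i`;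
`a_i (σ_1 a_r σ_1⁻¹) = (σ_1 a_r σ_1⁻¹) a_i` for `r < i`.
(Indices of generators are 0-based: `Sum.inl i ↦ a_{i+1}`, `Sum.inr k ↦ σ_{k+1}`.) -/
def mixedRels (m n : ℕ) : Set (FreeGroup (Fin m ⊕ Fin (n - 1))) :=
  {x | ∃ k j : Fin (n - 1), (k : ℕ) + 2 ≤ (j : ℕ) ∧
      x = genS m n k * genS m n j * (genS m n k)⁻¹ * (genS m n j)⁻¹} ∪
  {x | ∃ k j : Fin (n - 1), (k : ℕ) + 1 = (j : ℕ) ∧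
      x = genS m n k * genS m n j * genS m n k *
          (genS m n j)⁻¹ * (genS m n k)⁻¹ * (genS m n j)⁻¹} ∪
  {x | ∃ (i : Fin m) (k : Fin (n - 1)), 1 ≤ (k : ℕ) ∧
      x = genA m n i * genS m n k * (genA m n i)⁻¹ * (genS m n k)⁻¹} ∪
  {x | ∃ (i : Fin m) (k : Fin (n - 1)), (k : ℕ) = 0 ∧
      x = genA m n i * genS m n k * genA m n i * genS m n k *
          (genA m n i)⁻¹ * (genS m n k)⁻¹ * (genA m n i)⁻¹ * (genS m n k)⁻¹} ∪
  {x | ∃ (i r : Fin m) (k : Fin (n - 1)), (r : ℕ) < (i : ℕ) ∧ (k : ℕ) = 0 ∧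
      x = genA m n i * (genS m n k * genA m n r * (genS m n k)⁻¹) *
          (genA m n i)⁻¹ * (genS m n k * genA m n r * (genS m n k)⁻¹)⁻¹}

/-- The mixed braid group `B_{m,n}`. -/
abbrev MixedBraid (m n : ℕ) := PresentedGroup (mixedRels m n)

/-- The loop generator `a_i` (1-based, `1 ≤ i ≤ m`); junk value `1` out of range. -/
def aGen (m n i : ℕ) : MixedBraid m n :=
  if h : 1 ≤ i ∧ i ≤ m then PresentedGroup.of (Sum.inl ⟨i - 1, by omega⟩) else 1

/-- The braiding generator `σ_k` (1-based, `1 ≤ k ≤ n-1`); junk value `1` out of range. -/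
def sGen (m n k : ℕ) : MixedBraid m n :=
  if h : 1 ≤ k ∧ k ≤ n - 1 then PresentedGroup.of (Sum.inr ⟨k - 1, by omega⟩) else 1

/-- `λ_{l,1} := σ_l σ_{l-1} ⋯ σ_1`, with `λ_{0,1} := 1`. -/
def lamD (m n l : ℕ) : MixedBraid m n :=
  ((List.range l).map (fun t => sGen m n (l - t))).prod

/-- `λ_{1,l} := σ_1 σ_2 ⋯ σ_l`, with `λ_{1,0} := 1`. -/
def lamU (m n l : ℕ) : MixedBraid m n :=
  ((List.range l).map (fun t => sGen m n (t + 1))).prod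

namespace BraidAux

variable {N : ℕ}

lemma mk_rel_one {x : FreeGroup (Fin (N-1))} (hx : x ∈ braidRels N) :
    (QuotientGroup.mk x : BraidGroup N) = 1 := by
  rw [QuotientGroup.eq_one_iff]
  exact Subgroup.subset_normalClosure hx

lemma of_comm (s t : Fin (N-1)) (h : (s:ℕ)+2 ≤ t) :
    (PresentedGroup.of s : BraidGroup N) * PresentedGroup.of t
      = PresentedGroup.of t * PresentedGroup.of s := by
  have h1 := mk_rel_one (N := N) (Set.mem_union_left _ ⟨s, t, h, rfl⟩)
  simp only [QuotientGroup.mk_mul, QuotientGroup.mk_inv] at h1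
  rw [mul_inv_eq_one, mul_inv_eq_iff_eq_mul] at h1
  exact h1

lemma of_braid (s t : Fin (N-1)) (h : (s:ℕ)+1 = t) :
    (PresentedGroup.of s : BraidGroup N) * PresentedGroup.of t * PresentedGroup.of s
      = PresentedGroup.of t * PresentedGroup.of s * PresentedGroup.of t := by
  have h1 := mk_rel_one (N := N) (Set.mem_union_right _ ⟨s, t, h, rfl⟩)
  simp only [QuotientGroup.mk_mul, QuotientGroup.mk_inv] at h1
  rw [mul_inv_eq_one, mul_inv_eq_iff_eq_mul, mul_inv_eq_iff_eq_mul] at h1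
  exact h1

lemma sig_eq_of {s : ℕ} (h1 : 1 ≤ s) (h2 : s ≤ N-1) :
    sig N s = PresentedGroup.of ⟨s-1, by omega⟩ := dif_pos ⟨h1, h2⟩

lemma sig_comm {s t : ℕ} (h : s + 2 ≤ t) :
    Commute (sig N s) (sig N t) := by
  by_cases hs : 1 ≤ s ∧ s ≤ N-1
  · by_cases ht : 1 ≤ t ∧ t ≤ N-1
    · rw [sig_eq_of hs.1 hs.2, sig_eq_of ht.1 ht.2]
      exact of_comm _ _ (by simp only []; omega)
    · rw [show sig N t = 1 from dif_neg ht]; exact Commute.one_right _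
  · rw [show sig N s = 1 from dif_neg hs]; exact Commute.one_left _

lemma sig_braid {s : ℕ} (h1 : 1 ≤ s) (h2 : s + 1 ≤ N-1) :
    sig N s * sig N (s+1) * sig N s = sig N (s+1) * sig N s * sig N (s+1) := by
  rw [sig_eq_of h1 (by omega), sig_eq_of (s := s+1) (by omega) h2]
  exact of_braid _ _ (by simp only []; omega)

/-- `desc N a b = σ_b σ_{b-1} ⋯ σ_a` (equal to `1` when `b < a`). -/
def desc (N a b : ℕ) : BraidGroup N :=
  ((List.range (b + 1 - a)).map (fun l => sig N (b - l))).prod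

lemma desc_of_lt {a b : ℕ} (h : b < a) : desc N a b = 1 := by
  have : b + 1 - a = 0 := by omega
  simp [desc, this]

lemma desc_low {a b : ℕ} (h : a ≤ b) : desc N a b = desc N (a+1) b * sig N a := by
  unfold desc
  have e : b + 1 - a = (b - a) + 1 := by omega
  have e2 : b + 1 - (a + 1) = b - a := by omega
  rw [e, e2, List.range_succ, List.map_append, List.prod_append]
  simp only [List.map_cons, List.map_nil, List.prod_cons, List.prod_nil, mul_one]
  have e3 : b - (b - a) = a := by omega
  rw [e3]

lemma desc_high {a b : ℕ} (ha : 1 ≤ a) (h : a ≤ b) :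
    desc N a b = sig N b * desc N a (b-1) := by
  unfold desc
  have e : b + 1 - a = (b - a) + 1 := by omega
  have e2 : b - 1 + 1 - a = b - a := by omega
  rw [e, e2, List.range_succ_eq_map, List.map_cons, List.prod_cons, List.map_map]
  simp only [Nat.sub_zero]
  have e3 : List.map ((fun l => sig N (b - l)) ∘ Nat.succ) (List.range (b - a))
      = List.map (fun l => sig N (b - 1 - l)) (List.range (b - a)) := by
    apply List.map_congr_left
    intro l _
    simp only [Function.comp_apply]
    congr 1
    omega
  rw [e3]

lemma desc_split {a b c : ℕ} (ha : 1 ≤ a) (hc : a ≤ c + 1) (hcb : c ≤ b) :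
    desc N a b = desc N (c+1) b * desc N a c := by
  induction b, hcb using Nat.le_induction with
  | base => rw [desc_of_lt (Nat.lt_succ_self c), one_mul]
  | succ b hb ih =>
      have A : desc N a (b+1) = sig N (b+1) * desc N a b := by
        rw [desc_high ha (by omega)]
        simp only [Nat.add_sub_cancel]
      have B : desc N (c+1) (b+1) = sig N (b+1) * desc N (c+1) b := by
        rw [desc_high (by omega) (by omega)]
        simp only [Nat.add_sub_cancel]
      rw [A, B, ih, mul_assoc]

lemma commute_desc {a b : ℕ} {x : BraidGroup N}
    (h : ∀ u, a ≤ u → u ≤ b → Commute x (sig N u)) : Commute x (desc N a b) := by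
  apply Commute.list_prod_right
  intro y hy
  simp only [List.mem_map, List.mem_range] at hy
  obtain ⟨l, hl, rfl⟩ := hy
  exact h _ (by omega) (by omega)

lemma sig_shift {a b j : ℕ} (ha : 1 ≤ a) (hb : b ≤ N-1) (h1 : a ≤ j) (h2 : j + 1 ≤ b) :
    sig N j * desc N a b = desc N a b * sig N (j+1) := by
  have e1 : desc N a b = desc N (j+2) b * desc N a (j+1) :=
    desc_split ha (by omega) (by omega)
  have e2 : desc N a (j+1) = sig N (j+1) * desc N a j :=
    desc_high ha (by omega)
  have e3 : desc N a j = sig N j * desc N a (j-1) := desc_high ha h1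
  have c1 : Commute (sig N j) (desc N (j+2) b) :=
    commute_desc (fun u hu1 _ => sig_comm (by omega))
  have c2 : Commute (sig N (j+1)) (desc N a (j-1)) :=
    commute_desc (fun u _ hu2 => (sig_comm (show u + 2 ≤ j+1 by omega)).symm)
  have b3 : sig N j * sig N (j+1) * sig N j = sig N (j+1) * sig N j * sig N (j+1) :=
    sig_braid (by omega) (by omega)
  rw [e1, e2, e3]
  calc sig N j * (desc N (j+2) b * (sig N (j+1) * (sig N j * desc N a (j-1))))
      = (sig N j * desc N (j+2) b) * (sig N (j+1) * sig N j) * desc N a (j-1) := by group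
    _ = (desc N (j+2) b * sig N j) * (sig N (j+1) * sig N j) * desc N a (j-1) := by
        rw [c1.eq]
    _ = desc N (j+2) b * (sig N j * sig N (j+1) * sig N j) * desc N a (j-1) := by group
    _ = desc N (j+2) b * (sig N (j+1) * sig N j * sig N (j+1)) * desc N a (j-1) := by
        rw [b3]
    _ = desc N (j+2) b * (sig N (j+1) * sig N j) * (sig N (j+1) * desc N a (j-1)) := by group
    _ = desc N (j+2) b * (sig N (j+1) * sig N j) * (desc N a (j-1) * sig N (j+1)) := by
        rw [c2.eq]
    _ = desc N (j+2) b * (sig N (j+1) * (sig N j * desc N a (j-1))) * sig N (j+1) := by group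

lemma loop_eq_desc {m i : ℕ} :
    loop N m i = desc N (i+1) m * (sig N i)^2 * (desc N (i+1) m)⁻¹ := by
  simp only [loop, desc, Nat.add_sub_add_right]

/-- conjugation identity `σ_{s+1} σ_s² σ_{s+1}⁻¹ = σ_s⁻¹ σ_{s+1}² σ_s`. -/
lemma conj_sq {s : ℕ} (h1 : 1 ≤ s) (h2 : s + 1 ≤ N - 1) :
    sig N (s+1) * (sig N s)^2 * (sig N (s+1))⁻¹
      = (sig N s)⁻¹ * (sig N (s+1))^2 * sig N s := by
  have b := sig_braid h1 h2
  set x := sig N s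
  set y := sig N (s+1)
  simp only [pow_two]
  calc y * (x*x) * y⁻¹ = x⁻¹ * (x*y*x) * (x*y⁻¹) := by group
    _ = x⁻¹ * (y*x*y) * (x*y⁻¹) := by rw [b]
    _ = x⁻¹ * y * (x*y*x) * y⁻¹ := by group
    _ = x⁻¹ * y * (y*x*y) * y⁻¹ := by rw [b]
    _ = x⁻¹ * (y*y) * x := by group

lemma loop_rec {m i : ℕ} (h1 : 1 ≤ i) (h2 : i < m) (hm : m ≤ N-1) :
    loop N m i = (sig N i)⁻¹ * loop N m (i+1) * sig N i := by
  rw [loop_eq_desc, loop_eq_desc, desc_low (show i+1 ≤ m by omega)]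
  have key := conj_sq (N := N) h1 (by omega)
  have c : Commute (sig N i) (desc N (i+1+1) m) :=
    commute_desc (fun u hu1 _ => sig_comm (by omega))
  set D := desc N (i+1+1) m
  set x := sig N i
  set y := sig N (i+1)
  have cdl : D * x⁻¹ = x⁻¹ * D := c.inv_left.eq.symm
  have cdi : x * D⁻¹ = D⁻¹ * x := c.inv_right.eq
  calc D * y * x^2 * (D * y)⁻¹ = D * (y * x^2 * y⁻¹) * D⁻¹ := by group
    _ = D * (x⁻¹ * y^2 * x) * D⁻¹ := by rw [key]
    _ = (D * x⁻¹) * y^2 * (x * D⁻¹) := by group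
    _ = (x⁻¹ * D) * y^2 * (D⁻¹ * x) := by rw [cdl, cdi]
    _ = x⁻¹ * (D * y^2 * D⁻¹) * x := by group

lemma loop_rev {m i : ℕ} (h1 : 1 ≤ i) (h2 : i ≤ m) (hm : m ≤ N-1) :
    loop N m i = (desc N i (m-1))⁻¹ * (sig N m)^2 * desc N i (m-1) := by
  obtain ⟨k, hk⟩ : ∃ k, m - i = k := ⟨_, rfl⟩
  induction k generalizing i with
  | zero =>
      have : i = m := by omega
      subst this
      rw [loop_eq_desc, desc_of_lt (by omega), desc_of_lt (by omega)]
      group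
  | succ k ih =>
      have hlt : i < m := by omega
      rw [loop_rec h1 hlt hm, ih (by omega) (by omega) (by omega),
        desc_low (show i ≤ m-1 by omega)]
      group

lemma commute_loop_far {m i t : ℕ} (hi : i ≤ m) (ht : m + 2 ≤ t) :
    Commute (loop N m i) (sig N t) := by
  rw [loop_eq_desc]
  have h1 : Commute (desc N (i+1) m) (sig N t) :=
    (commute_desc (fun u _ hu2 => (sig_comm (show u+2 ≤ t by omega)).symm)).symm
  have h2 : Commute ((sig N i)^2) (sig N t) :=
    (sig_comm (show i+2 ≤ t by omega)).pow_left 2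
  exact (h1.mul_left h2).mul_left h1.inv_left

lemma rel4 {m i : ℕ} (h1 : 1 ≤ i) (h2 : i ≤ m) (hm1 : m + 1 ≤ N - 1) :
    loop N m i * sig N (m+1) * loop N m i * sig N (m+1)
      = sig N (m+1) * loop N m i * sig N (m+1) * loop N m i := by
  rw [loop_rev h1 h2 (by omega)]
  have b := sig_braid (show 1 ≤ m by omega) hm1
  have cD : Commute (sig N (m+1)) (desc N i (m-1)) :=
    commute_desc (fun v _ hv2 => (sig_comm (show v+2 ≤ m+1 by omega)).symm)
  set D := desc N i (m-1)
  set t := sig N m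
  set u := sig N (m+1)
  have cDu : D * u = u * D := cD.eq.symm
  have cDui : u * D⁻¹ = D⁻¹ * u := cD.inv_right.eq
  have half1 : t*t*u*t*t*u = (t*u)*(t*u)*(t*u) := by
    calc t*t*u*t*t*u = t*(t*u*t)*(t*u) := by group
      _ = t*(u*t*u)*(t*u) := by rw [b]
      _ = (t*u)*(t*u)*(t*u) := by group
  have half2 : u*t*t*u*t*t = (u*t)*(u*t)*(u*t) := by
    calc u*t*t*u*t*t = u*t*(t*u*t)*t := by group
      _ = u*t*(u*t*u)*t := by rw [b]
      _ = (u*t)*(u*t)*(u*t) := by group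
  have m1 : (t*u)*(t*u)*(t*u) = (u*t*u)*(u*t*u) := by
    calc (t*u)*(t*u)*(t*u) = (t*u*t)*(u*t*u) := by group
      _ = (u*t*u)*(u*t*u) := by rw [b]
  have m2 : (u*t)*(u*t)*(u*t) = (u*t*u)*(u*t*u) := by
    calc (u*t)*(u*t)*(u*t) = (u*t*u)*(t*u*t) := by group
      _ = (u*t*u)*(u*t*u) := by rw [b]
  have core : t*t*u*t*t*u = u*t*t*u*t*t :=
    half1.trans ((m1.trans m2.symm).trans half2.symm)
  simp only [pow_two]
  have L : D⁻¹*(t*t)*D*u*(D⁻¹*(t*t)*D)*u = D⁻¹*(t*t*u*t*t*u)*D := by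
    calc D⁻¹*(t*t)*D*u*(D⁻¹*(t*t)*D)*u
        = D⁻¹*(t*t)*(D*u)*(D⁻¹*(t*t))*(D*u) := by group
      _ = D⁻¹*(t*t)*(u*D)*(D⁻¹*(t*t))*(u*D) := by rw [cDu]
      _ = D⁻¹*(t*t*u)*(D*D⁻¹)*(t*t*u)*D := by group
      _ = D⁻¹*(t*t*u*t*t*u)*D := by group
  have R : u*(D⁻¹*(t*t)*D)*u*(D⁻¹*(t*t)*D) = D⁻¹*(u*t*t*u*t*t)*D := by
    calc u*(D⁻¹*(t*t)*D)*u*(D⁻¹*(t*t)*D)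
        = (u*D⁻¹)*(t*t)*(D*u)*(D⁻¹*(t*t))*D := by group
      _ = (D⁻¹*u)*(t*t)*(u*D)*(D⁻¹*(t*t))*D := by rw [cDu, cDui]
      _ = D⁻¹*(u*t*t*u*t*t)*D := by group
  rw [L, R, core]

lemma commute_sig_Q {m r j : ℕ} (hr : 1 ≤ r) (hj1 : r+1 ≤ j) (hj2 : j ≤ m) (hm : m+1 ≤ N-1) :
    Commute (sig N j)
      (desc N (r+1) (m+1) * (sig N r)^2 * (desc N (r+1) (m+1))⁻¹) := by
  have sh : sig N j * desc N (r+1) (m+1) = desc N (r+1) (m+1) * sig N (j+1) :=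
    sig_shift (by omega) hm hj1 (by omega)
  set W := desc N (r+1) (m+1)
  set s := sig N r
  have sh2 : sig N (j+1) * W⁻¹ = W⁻¹ * sig N j := by
    calc sig N (j+1) * W⁻¹ = W⁻¹*(W*sig N (j+1))*W⁻¹ := by group
      _ = W⁻¹*(sig N j*W)*W⁻¹ := by rw [sh]
      _ = W⁻¹*sig N j := by group
  have c : sig N (j+1) * s = s * sig N (j+1) :=
    ((sig_comm (show r+2 ≤ j+1 by omega)).symm).eq
  unfold Commute SemiconjBy
  simp only [pow_two]
  calc sig N j * (W * (s*s) * W⁻¹)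
      = (sig N j * W) * (s*s) * W⁻¹ := by group
    _ = (W * sig N (j+1)) * (s*s) * W⁻¹ := by rw [sh]
    _ = W * (sig N (j+1) * s) * (s * W⁻¹) := by group
    _ = W * (s * sig N (j+1)) * (s * W⁻¹) := by rw [c]
    _ = W * s * (sig N (j+1) * s) * W⁻¹ := by group
    _ = W * s * (s * sig N (j+1)) * W⁻¹ := by rw [c]
    _ = W * (s*s) * (sig N (j+1) * W⁻¹) := by group
    _ = W * (s*s) * (W⁻¹ * sig N j) := by rw [sh2]
    _ = W * (s*s) * W⁻¹ * sig N j := by group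

lemma rel5 {m i r : ℕ} (hr : 1 ≤ r) (hri : r < i) (hi : i ≤ m) (hm : m+1 ≤ N-1) :
    Commute (loop N m i) (sig N (m+1) * loop N m r * (sig N (m+1))⁻¹) := by
  have hQ : sig N (m+1) * loop N m r * (sig N (m+1))⁻¹
      = desc N (r+1) (m+1) * (sig N r)^2 * (desc N (r+1) (m+1))⁻¹ := by
    rw [loop_eq_desc (m := m) (i := r),
        desc_high (show 1 ≤ r+1 by omega) (show r+1 ≤ m+1 by omega)]
    simp only [Nat.add_sub_cancel]
    group
  rw [hQ, loop_eq_desc]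
  have key : ∀ j, r+1 ≤ j → j ≤ m →
      Commute (sig N j)
        (desc N (r+1) (m+1) * (sig N r)^2 * (desc N (r+1) (m+1))⁻¹) :=
    fun j a b => commute_sig_Q hr a b hm
  have c1 : Commute (desc N (i+1) m)
      (desc N (r+1) (m+1) * (sig N r)^2 * (desc N (r+1) (m+1))⁻¹) :=
    (commute_desc (fun u hu1 hu2 => (key u (by omega) hu2).symm)).symm
  have c2 : Commute ((sig N i)^2)
      (desc N (r+1) (m+1) * (sig N r)^2 * (desc N (r+1) (m+1))⁻¹) :=
    (key i (by omega) hi).pow_left 2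
  exact (c1.mul_left c2).mul_left c1.inv_left

/-- The image of the generators of the mixed braid group in `BraidGroup N`. -/
def fimg (m n N : ℕ) : Fin m ⊕ Fin (n-1) → BraidGroup N :=
  Sum.elim (fun i => loop N m ((i : ℕ)+1)) (fun k => sig N (m+(k : ℕ)+1))

lemma mixed_rels_hold (m n : ℕ) (hm : 1 ≤ m) (hn : 1 ≤ n) :
    ∀ r ∈ mixedRels m n, FreeGroup.lift (fimg m n (m+n)) r = 1 := by
  intro x hx
  simp only [mixedRels, Set.mem_union, Set.mem_setOf_eq] at hx
  rcases hx with ((((⟨k, j, hkj, rfl⟩ | ⟨k, j, hkj, rfl⟩) | ⟨i, k, hk, rfl⟩) |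
    ⟨i, k, hk, rfl⟩) | ⟨i, r, k, hri, hk, rfl⟩)
  · -- far commutation among σ's
    simp only [map_mul, map_inv, genS, FreeGroup.lift_apply_of, fimg, Sum.elim_inr]
    have hc : Commute (sig (m+n) (m+(k:ℕ)+1)) (sig (m+n) (m+(j:ℕ)+1)) :=
      sig_comm (by omega)
    rw [hc.eq]
    group
  · -- braid relation among σ's
    simp only [map_mul, map_inv, genS, FreeGroup.lift_apply_of, fimg, Sum.elim_inr]
    have hj := j.isLt
    have e : m+(j:ℕ)+1 = (m+(k:ℕ)+1)+1 := by omega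
    rw [e]
    have b := sig_braid (N := m+n) (s := m+(k:ℕ)+1) (by omega) (by omega)
    rw [b]
    group
  · -- a_i commutes with σ_k, k ≥ 2
    simp only [map_mul, map_inv, genA, genS, FreeGroup.lift_apply_of, fimg,
      Sum.elim_inl, Sum.elim_inr]
    have hil := i.isLt
    have hc : Commute (loop (m+n) m ((i:ℕ)+1)) (sig (m+n) (m+(k:ℕ)+1)) :=
      commute_loop_far (by omega) (by omega)
    rw [hc.eq]
    group
  · -- a_i σ_1 a_i σ_1 = σ_1 a_i σ_1 a_i
    simp only [map_mul, map_inv, genA, genS, FreeGroup.lift_apply_of, fimg,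
      Sum.elim_inl, Sum.elim_inr]
    have hil := i.isLt
    have hkl := k.isLt
    have e : m+(k:ℕ)+1 = m+1 := by omega
    rw [e]
    have h := rel4 (N := m+n) (m := m) (i := (i:ℕ)+1) (by omega) (by omega) (by omega)
    rw [h]
    group
  · -- a_i commutes with σ_1 a_r σ_1⁻¹ for r < i
    simp only [map_mul, map_inv, genA, genS, FreeGroup.lift_apply_of, fimg,
      Sum.elim_inl, Sum.elim_inr]
    have hil := i.isLt
    have hkl := k.isLt
    have e : m+(k:ℕ)+1 = m+1 := by omega
    rw [e]
    have h := rel5 (N := m+n) (m := m) (i := (i:ℕ)+1) (r := (r:ℕ)+1)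
      (by omega) (by omega) (by omega) (by omega)
    rw [h.eq]
    group

end BraidAux

/-- There is a group homomorphism `φ : B_{m,n} → B_{m+n}` sending `a_i` to the
loop element `σ_m ⋯ σ_{i+1} σ_i² σ_{i+1}⁻¹ ⋯ σ_m⁻¹` and `σ_j` to `σ_{m+j}`. -/
theorem mixed_to_braid_hom (m n : ℕ) (hm : 1 ≤ m) (hn : 1 ≤ n) :
    ∃ φ : MixedBraid m n →* BraidGroup (m + n),
      (∀ i : ℕ, 1 ≤ i → i ≤ m → φ (aGen m n i) = loop (m + n) m i) ∧
      (∀ j : ℕ, 1 ≤ j → j ≤ n - 1 → φ (sGen m n j) = sig (m + n) (m + j)) := by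
  refine ⟨PresentedGroup.toGroup (BraidAux.mixed_rels_hold m n hm hn), ?_, ?_⟩
  · intro i hi1 hi2
    rw [aGen, dif_pos ⟨hi1, hi2⟩, PresentedGroup.toGroup.of]
    show loop (m+n) m ((i - 1) + 1) = loop (m+n) m i
    congr 1
    omega
  · intro j hj1 hj2
    rw [sGen, dif_pos ⟨hj1, hj2⟩, PresentedGroup.toGroup.of]
    show sig (m+n) (m + (j - 1) + 1) = sig (m+n) (m + j)
    congr 1
    omega
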